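/- Let f : X → Y be a continuous map between T_D topological spaces. Then the induced frame homomorphism Opens(Y) → Opens(X), V ↦ f⁻¹(V), is exact: for every family (V_i) of opens of Y with exact infimum in Opens(Y), the family (f⁻¹(V_i)) has exact infimum in Opens(X) and ⨅_i f⁻¹(V_i) = f⁻¹(⨅_i V_i). -/
import Mathlib


open TopologicalSpace

/-- A subset of a frame has exact infimum if joining commutes with the infimum. -/
def ExactInfSet {L : Type*} [Order.Frame L] (S : Set L) : Prop :=
  ∀ z : L, sInf S ⊔ z = sInf ((fun x => x ⊔ z) '' S)

/-- A space is `T_D` if every point is the difference of two open sets. -/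
def IsTD (X : Type*) [TopologicalSpace X] : Prop :=
  ∀ x : X, ∃ U V : Opens X, (U : Set X) \ (V : Set X) = {x}

lemma coe_sInf' {X : Type*} [TopologicalSpace X] (S : Set (Opens X)) :
    ((sInf S : Opens X) : Set X) = interior (⋂ U ∈ S, (U : Set X)) := by
  apply subset_antisymm
  · exact interior_maximal (Set.subset_iInter₂ fun U hU => sInf_le hU) (sInf S).isOpen
  · have : (Opens.interior (⋂ U ∈ S, (U : Set X))) ≤ sInf S :=
      le_sInf fun U hU =>
        show interior (⋂ U ∈ S, (U : Set X)) ⊆ (U : Set X) from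
          interior_subset.trans (Set.biInter_subset_of_mem hU)
    exact this

lemma biInter_union_eq {X : Type*} (S : Set (Set X)) (z : Set X) :
    ⋂ U ∈ S, (U ∪ z) = (⋂ U ∈ S, U) ∪ z := by
  ext x
  simp only [Set.mem_iInter, Set.mem_union]
  by_cases hz : x ∈ z <;> simp [hz]

/-- If the intersection of a family of opens is open, then the family has exact infimum
and its infimum is that intersection. -/
lemma exact_of_isOpen_iInter {X : Type*} [TopologicalSpace X] (S : Set (Opens X))
    (h : IsOpen (⋂ U ∈ S, (U : Set X))) :
    ExactInfSet S ∧ ((sInf S : Opens X) : Set X) = ⋂ U ∈ S, (U : Set X) := by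
  have hcarrier : ((sInf S : Opens X) : Set X) = ⋂ U ∈ S, (U : Set X) := by
    rw [coe_sInf', h.interior_eq]
  refine ⟨fun z => ?_, hcarrier⟩
  apply Opens.ext
  rw [Opens.coe_sup, hcarrier, coe_sInf']
  have him : ⋂ U ∈ (fun x => x ⊔ z) '' S, (U : Set X) = ⋂ U ∈ S, ((U : Set X) ∪ z) := by
    rw [Set.biInter_image]
    simp [Opens.coe_sup]
  rw [him]
  have : ⋂ U ∈ S, ((U : Set X) ∪ (z : Set X)) = (⋂ U ∈ S, (U : Set X)) ∪ z := by
    have := biInter_union_eq ((fun (U : Opens X) => (U : Set X)) '' S) (z : Set X)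
    simpa [Set.biInter_image] using biInter_union_eq (SetLike.coe '' S) (z : Set X)
  rw [this, (h.union z.isOpen).interior_eq]

/-- In a `T_D` space, a family of opens with exact infimum has open intersection. -/
lemma isOpen_iInter_of_exact {X : Type*} [TopologicalSpace X] (hX : IsTD X)
    (S : Set (Opens X)) (hS : ExactInfSet S) : IsOpen (⋂ U ∈ S, (U : Set X)) := by
  have hsub : (⋂ U ∈ S, (U : Set X)) ⊆ interior (⋂ U ∈ S, (U : Set X)) := by
    intro x hx
    obtain ⟨U, V, hUV⟩ := hX x
    have hxU : x ∈ (U : Set X) := by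
      have : x ∈ (U : Set X) \ V := hUV ▸ rfl
      exact this.1
    have hxV : x ∉ (V : Set X) := by
      have : x ∈ (U : Set X) \ V := hUV ▸ rfl
      exact this.2
    have h1 := congrArg (fun W : Opens X => (W : Set X)) (hS V)
    simp only [Opens.coe_sup, coe_sInf'] at h1
    have him : ⋂ W ∈ (fun x => x ⊔ V) '' S, (W : Set X) = ⋂ W ∈ S, ((W : Set X) ∪ V) := by
      rw [Set.biInter_image]
      simp [Opens.coe_sup]
    rw [him] at h1
    have h2 : ⋂ W ∈ S, ((W : Set X) ∪ (V : Set X)) = (⋂ W ∈ S, (W : Set X)) ∪ V := by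
      simpa [Set.biInter_image] using biInter_union_eq (SetLike.coe '' S) (V : Set X)
    rw [h2] at h1
    -- x is in the interior of (⋂ ∪ V) since U is an open neighborhood contained in it
    have hUsub : (U : Set X) ⊆ (⋂ W ∈ S, (W : Set X)) ∪ V := by
      intro y hy
      by_cases hyV : y ∈ (V : Set X)
      · exact Or.inr hyV
      · have : y ∈ (U : Set X) \ V := ⟨hy, hyV⟩
        rw [hUV] at this
        exact Or.inl (this ▸ hx)
    have hxint : x ∈ interior ((⋂ W ∈ S, (W : Set X)) ∪ V) :=
      interior_maximal hUsub U.isOpen hxU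
    rw [← h1] at hxint
    rcases hxint with h | h
    · exact h
    · exact absurd h hxV
  have : interior (⋂ U ∈ S, (U : Set X)) = ⋂ U ∈ S, (U : Set X) :=
    subset_antisymm interior_subset hsub
  rw [← this]
  exact isOpen_interior

/-- a continuous map `f : X → Y` between `T_D` spaces induces an exact frame
homomorphism `V ↦ f⁻¹(V)` from `Opens Y` to `Opens X`: exact meets are mapped to exact
meets and are preserved. -/
theorem continuous_map_td_exact {X Y : Type*} [TopologicalSpace X] [TopologicalSpace Y]
    (hX : IsTD X) (hY : IsTD Y) (f : X → Y) (hf : Continuous f) :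
    ∀ 𝒱 : Set (Opens Y), ExactInfSet 𝒱 →
      ExactInfSet ((Opens.comap ⟨f, hf⟩ : FrameHom (Opens Y) (Opens X)) '' 𝒱) ∧
      Opens.comap ⟨f, hf⟩ (sInf 𝒱) =
        sInf ((Opens.comap ⟨f, hf⟩ : FrameHom (Opens Y) (Opens X)) '' 𝒱) := by
  intro 𝒱 h𝒱
  have hopenY : IsOpen (⋂ V ∈ 𝒱, (V : Set Y)) := isOpen_iInter_of_exact hY 𝒱 h𝒱
  have h𝒱inf : ((sInf 𝒱 : Opens Y) : Set Y) = ⋂ V ∈ 𝒱, (V : Set Y) := by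
    rw [coe_sInf', hopenY.interior_eq]
  have hpre : ⋂ U ∈ (Opens.comap ⟨f, hf⟩ : FrameHom (Opens Y) (Opens X)) '' 𝒱, (U : Set X)
      = f ⁻¹' (⋂ V ∈ 𝒱, (V : Set Y)) := by
    rw [Set.biInter_image, Set.preimage_iInter₂]
    rfl
  have hopenX : IsOpen (⋂ U ∈ (Opens.comap ⟨f, hf⟩ : FrameHom (Opens Y) (Opens X)) '' 𝒱,
      (U : Set X)) := by
    rw [hpre]
    exact hopenY.preimage hf
  obtain ⟨hexact, hcoe⟩ := exact_of_isOpen_iInter _ hopenX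
  refine ⟨hexact, Opens.ext ?_⟩
  rw [hcoe, hpre, Opens.coe_comap, h𝒱inf]
  rfl
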